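/- In the iterative multinomial risk recursion with decaying mixture weights, if at each step t ≥ 1 the sample size satisfies n_t > (n_{t-1} - 1)/(α_t(2 - α_t)) + 1, then R_t < R_{t-1}; consequently, if this holds for all t, the sequence (R_t) is strictly decreasing and converges to a limit strictly below R_0. -/

import Mathlib

open Filter

/-- For the multinomial risk recursion
`R_t = n₀R₀/n_t + ((n_t-1)/n_t)(1-α_t)² R_{t-1}` with decaying mixture weights
`α_t ∈ (0,1)`, if at each step `n_t > (n_{t-1}-1)/(α_t(2-α_t)) + 1`, then each step
strictly improves, `R_t < R_{t-1}`; consequently `(R_t)` is strictly decreasing and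
converges to a limit strictly below `R_0`. -/
theorem stmt_5 (n : ℕ → ℕ) (hn : ∀ t, 1 ≤ n t)
    (α : ℕ → ℝ) (hα : ∀ t, α t ∈ Set.Ioo (0 : ℝ) 1)
    (R : ℕ → ℝ) (hR0 : 0 < R 0)
    (hrec : ∀ t, R (t + 1) =
      (n 0 : ℝ) * R 0 / n (t + 1)
        + ((n (t + 1) : ℝ) - 1) / n (t + 1) * (1 - α (t + 1)) ^ 2 * R t)
    (hsize : ∀ t, ((n t : ℝ) - 1) / (α (t + 1) * (2 - α (t + 1))) + 1 < (n (t + 1) : ℝ)) :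
    (∀ t, R (t + 1) < R t) ∧ StrictAnti R ∧
      ∃ L, Tendsto R atTop (nhds L) ∧ L < R 0 := by
  have hnpos : ∀ t, (0:ℝ) < n t := fun t => by exact_mod_cast hn t
  have hn1 : ∀ t, (1:ℝ) ≤ n t := fun t => by exact_mod_cast hn t
  have hpos : ∀ t, 0 < R t := by
    intro t
    induction t with
    | zero => exact hR0
    | succ t ih =>
      rw [hrec t]
      have h1 : 0 < (n 0 : ℝ) * R 0 / n (t+1) :=
        div_pos (mul_pos (hnpos 0) hR0) (hnpos (t+1))
      have h2 : 0 ≤ ((n (t + 1) : ℝ) - 1) / n (t + 1) * (1 - α (t + 1)) ^ 2 * R t := by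
        apply mul_nonneg (mul_nonneg (div_nonneg (by linarith [hn1 (t+1)]) (hnpos (t+1)).le)
          (sq_nonneg _)) ih.le
      linarith
  have hlow : ∀ t, (n 0 : ℝ) * R 0 / n t ≤ R t := by
    intro t
    induction t with
    | zero =>
      rw [mul_comm, mul_div_assoc, div_self (hnpos 0).ne', mul_one]
    | succ t ih =>
      rw [hrec t]
      have h2 : 0 ≤ ((n (t + 1) : ℝ) - 1) / n (t + 1) * (1 - α (t + 1)) ^ 2 * R t := by
        apply mul_nonneg (mul_nonneg (div_nonneg (by linarith [hn1 (t+1)]) (hnpos (t+1)).le)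
          (sq_nonneg _)) (hpos t).le
      linarith
  have hstep : ∀ t, R (t + 1) < R t := by
    intro t
    obtain ⟨ha0, ha1⟩ := hα (t+1)
    set a := α (t+1)
    have haa : 0 < a * (2 - a) := by nlinarith
    -- from hsize : (n t - 1)/(a(2-a)) + 1 < n (t+1)
    have hkey : (n t : ℝ) - 1 < ((n (t+1) : ℝ) - 1) * (a * (2 - a)) := by
      have h' : ((n t : ℝ) - 1) / (a * (2 - a)) < (n (t+1) : ℝ) - 1 := by linarith [hsize t]
      calc (n t : ℝ) - 1 = ((n t : ℝ) - 1) / (a * (2 - a)) * (a * (2 - a)) := by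
            rw [div_mul_cancel₀ _ haa.ne']
        _ < ((n (t+1) : ℝ) - 1) * (a * (2 - a)) := by
            exact mul_lt_mul_of_pos_right h' haa
    -- n0 R0 ≤ n t * R t
    have hlb : (n 0 : ℝ) * R 0 ≤ (n t : ℝ) * R t := by
      have := hlow t
      rw [div_le_iff₀ (hnpos t)] at this
      linarith [this]
    have hm := hnpos (t+1)
    have key2 : (n 0 : ℝ) * R 0 + ((n (t+1) : ℝ) - 1) * (1 - a)^2 * R t < (n (t+1) : ℝ) * R t := by
      nlinarith [mul_lt_mul_of_pos_right hkey (hpos t), hlb]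
    have heq : R (t+1) = ((n 0 : ℝ) * R 0 + ((n (t+1) : ℝ) - 1) * (1 - a)^2 * R t) / (n (t+1)) := by
      rw [hrec t]; field_simp; rw [show α (t+1) = a from rfl]; ring
    rw [heq, div_lt_iff₀ hm]
    linarith [key2]
  have hanti : StrictAnti R := strictAnti_nat_of_succ_lt hstep
  refine ⟨hstep, hanti, ?_⟩
  have hbdd : BddBelow (Set.range R) := ⟨0, by rintro x ⟨t, rfl⟩; exact (hpos t).le⟩
  refine ⟨⨅ t, R t, tendsto_atTop_ciInf hanti.antitone hbdd, ?_⟩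
  exact lt_of_le_of_lt (ciInf_le hbdd 1) (hstep 0)
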